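/- Let 𝕋^N := (ℝ/ℤ)^N be the flat N-torus with the metric d(a,b) := max_{1≤i≤N} d_{ℝ/ℤ}(a_i, b_i), where d_{ℝ/ℤ} is the quotient metric of ℝ/ℤ, and let q : ℝ^N → 𝕋^N be the canonical projection. Let f : 𝕋^N → 𝕋^N be a map, ←𝕋^N_f its inverse limit with shift f̂, and d_∞ the sup metric on ←𝕋^N_f. Let 0 < η < 1 and let w : ←𝕋^N_f → ℝ^N satisfy ‖w(x) − w(x')‖_∞ ≤ η·d_∞(x, x') for all x, x' ∈ ←𝕋^N_f (sup norm on ℝ^N). Define h₀ : ←𝕋^N_f → 𝕋^N by h₀(x) := x₀ + q(w(x)). Then the map h : ←𝕋^N_f → (𝕋^N)^ℤ given by h(x) := (h₀(f̂^n(x)))_{n∈ℤ} is injective. -/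
import Mathlib


/-- The metric `d_∞` on `X^ℤ`: `d_∞(x,y) = sup_{n ∈ ℤ} d(x_n, y_n)`. -/
noncomputable def dInfty {X : Type*} [PseudoMetricSpace X] (x y : ℤ → X) : ℝ :=
  ⨆ n : ℤ, dist (x n) (y n)

/-- The quotient norm on the circle is at most the absolute value of a representative. -/
lemma addCircle_norm_coe_le (v : ℝ) : ‖(v : AddCircle (1 : ℝ))‖ ≤ |v| := by
  rw [AddCircle.norm_eq]
  simpa using round_le v 0

/-- Shifting a sequence does not change `dInfty`. -/
lemma dInfty_shift {X : Type*} [PseudoMetricSpace X] (x y : ℤ → X) (n : ℤ) :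
    dInfty (fun k => x (k + n)) (fun k => y (k + n)) = dInfty x y := by
  unfold dInfty
  rw [iSup, iSup]
  congr 1
  ext r
  constructor
  · rintro ⟨k, rfl⟩; exact ⟨k + n, rfl⟩
  · rintro ⟨m, rfl⟩; exact ⟨m - n, by simp⟩

/-- On the flat torus `𝕋^N = (ℝ/ℤ)^N` (with the sup metric on coordinates,
each coordinate carrying the quotient metric of `ℝ/ℤ`), let `f : 𝕋^N → 𝕋^N` be a map with
inverse limit `←𝕋^N_f` (on which the iterated shift acts by `f̂ⁿ(x) = (x_{k+n})_k`).
Let `0 < η < 1` and `w : ←𝕋^N_f → ℝ^N` be `η`-Lipschitz from `d_∞` to the sup norm.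
Define `h₀(x) = x₀ + q(w(x))`, where `q : ℝ^N → 𝕋^N` is the canonical projection.  Then
`h(x) := (h₀(f̂ⁿ(x)))_{n ∈ ℤ}` is injective on `←𝕋^N_f`. -/
theorem robbin_injectivity_criterion_torus (N : ℕ)
    (f : (Fin N → AddCircle (1 : ℝ)) → (Fin N → AddCircle (1 : ℝ)))
    (η : ℝ) (hη0 : 0 < η) (hη1 : η < 1)
    (w : (ℤ → Fin N → AddCircle (1 : ℝ)) → (Fin N → ℝ))
    (hw : ∀ x ∈ {x : ℤ → Fin N → AddCircle (1 : ℝ) | ∀ n : ℤ, f (x n) = x (n + 1)},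
          ∀ x' ∈ {x : ℤ → Fin N → AddCircle (1 : ℝ) | ∀ n : ℤ, f (x n) = x (n + 1)},
          ‖w x - w x'‖ ≤ η * dInfty x x') :
    ∀ x ∈ {x : ℤ → Fin N → AddCircle (1 : ℝ) | ∀ n : ℤ, f (x n) = x (n + 1)},
    ∀ x' ∈ {x : ℤ → Fin N → AddCircle (1 : ℝ) | ∀ n : ℤ, f (x n) = x (n + 1)},
      (∀ n : ℤ,
        (x n + fun i => (↑(w (fun k => x (k + n)) i) : AddCircle (1 : ℝ)))
          = (x' n + fun i => (↑(w (fun k => x' (k + n)) i) : AddCircle (1 : ℝ)))) →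
      x = x' := by
  intro x hx x' hx' hxx'
  set D := dInfty x x' with hD
  have hbdd : BddAbove (Set.range fun n : ℤ => dist (x n) (x' n)) := by
    refine ⟨1 / 2, ?_⟩
    rintro _ ⟨n, rfl⟩
    refine (dist_pi_le_iff (by norm_num)).mpr fun i => ?_
    rw [dist_eq_norm]
    simpa using AddCircle.norm_le_half_period (1 : ℝ) one_ne_zero
  have hD0 : 0 ≤ D := le_trans dist_nonneg (le_ciSup hbdd 0)
  -- membership of shifts in the inverse limit
  have hshift : ∀ y ∈ {y : ℤ → Fin N → AddCircle (1 : ℝ) | ∀ n : ℤ, f (y n) = y (n + 1)},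
      ∀ n : ℤ, (fun k => y (k + n)) ∈
        {y : ℤ → Fin N → AddCircle (1 : ℝ) | ∀ n : ℤ, f (y n) = y (n + 1)} := by
    intro y hy n k
    simpa [add_right_comm] using hy (k + n)
  -- key pointwise bound
  have key : ∀ n : ℤ, dist (x n) (x' n) ≤ η * D := by
    intro n
    refine (dist_pi_le_iff (by positivity)).mpr fun i => ?_
    have hni := congrFun (hxx' n) i
    simp only [Pi.add_apply] at hni
    have h1 : dist (x n i) (x' n i)
        = dist ((w (fun k => x' (k + n)) i : ℝ) : AddCircle (1 : ℝ))
            ((w (fun k => x (k + n)) i : ℝ) : AddCircle (1 : ℝ)) := by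
      rw [← dist_add_right (x n i) (x' n i)
        ((w (fun k => x (k + n)) i : ℝ) : AddCircle (1 : ℝ)), hni,
        dist_add_left]
    rw [h1, dist_eq_norm, ← AddCircle.coe_sub]
    calc ‖((w (fun k => x' (k + n)) i - w (fun k => x (k + n)) i : ℝ) : AddCircle (1 : ℝ))‖
        ≤ |w (fun k => x' (k + n)) i - w (fun k => x (k + n)) i| := addCircle_norm_coe_le _
      _ = ‖(w (fun k => x' (k + n)) - w (fun k => x (k + n))) i‖ := by
          simp [Real.norm_eq_abs]
      _ ≤ ‖w (fun k => x' (k + n)) - w (fun k => x (k + n))‖ := norm_le_pi_norm _ i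
      _ ≤ η * dInfty (fun k => x' (k + n)) (fun k => x (k + n)) :=
          hw _ (hshift x' hx' n) _ (hshift x hx n)
      _ = η * D := by
          rw [dInfty_shift]
          congr 1
          unfold dInfty
          simp only [dist_comm]
          rfl
  have hDle : D ≤ η * D := ciSup_le key
  have hDzero : D = 0 := by nlinarith
  funext n
  have h1 : dist (x n) (x' n) ≤ D := le_ciSup hbdd n
  rw [hDzero] at h1
  exact eq_of_dist_eq_zero (le_antisymm h1 dist_nonneg)
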